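/- arXiv:2110.11801 — 4 statements merged into one kernel-verified Lean document; each statement's English description precedes it below -/
import Mathlib

section
/- Let u = x_{i_1}···x_{i_d} be a t-spread monomial in n variables (i_1 < ··· < i_d with gaps ≥ t). Suppose there exists an index q ∈ [d] with i_q + 1 ≤ n - (d-q)t, and let q be the maximum such index. Then w = x_{i_1}···x_{i_{q-1}} x_{i_q+1} x_{i_q+1+t} ··· x_{i_q+1+(d-q)t} is a t-spread monomial of degree d in n variables, w <_slex u, and w is the greatest t-spread monomial of degree d that is smaller than u in the squarefree lexicographic order. -/
/-- A sequence `i : Fin d → ℕ` represents a `t`-spread monomial in `n` variables. -/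
def IsTSpread (n t : ℕ) {d : ℕ} (i : Fin d → ℕ) : Prop :=
  (∀ k, 1 ≤ i k ∧ i k ≤ n) ∧
  ∀ (j : ℕ) (h : j + 1 < d), i ⟨j, Nat.lt_of_succ_lt h⟩ + t ≤ i ⟨j + 1, h⟩

/-- `SlexGT u v` means `u >_slex v`: at the first position where the support
sequences differ, `u` has the smaller index. -/
def SlexGT {d : ℕ} (u v : Fin d → ℕ) : Prop :=
  ∃ s : Fin d, (∀ r < s, u r = v r) ∧ u s < v s

lemma spread_chain {n t d : ℕ} {z : Fin d → ℕ} (hz : IsTSpread n t z) :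
    ∀ (m : ℕ) (a b : Fin d), (b : ℕ) = (a : ℕ) + m → z a + m * t ≤ z b := by
  intro m
  induction m with
  | zero =>
    intro a b hb
    have : b = a := Fin.ext (by omega)
    simp [this]
  | succ m ih =>
    intro a b hb
    have hlt : (a : ℕ) + m + 1 < d := by
      have := b.isLt; omega
    have h1 := ih a ⟨(a : ℕ) + m, by omega⟩ rfl
    have h2 := hz.2 ((a : ℕ) + m) hlt
    have hbe : b = ⟨(a : ℕ) + m + 1, hlt⟩ := Fin.ext (by simp only [Fin.val_mk]; omega)
    rw [hbe, Nat.succ_mul, ← Nat.add_assoc]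
    exact le_trans (Nat.add_le_add_right h1 t) h2

/-- The `t`-lex successor: if `q` is the maximal index with
`i_q + 1 ≤ n - (d-q)t`, then `w = x_{i_1}⋯x_{i_{q-1}} x_{i_q+1} x_{i_q+1+t} ⋯
x_{i_q+1+(d-q)t}` is a `t`-spread monomial, `w <_slex u`, and `w` is the
greatest `t`-spread monomial of degree `d` smaller than `u`. -/
theorem tlex_successor (n d t : ℕ) (ht : 1 ≤ t) (hd : 1 ≤ d)
    (hn : 1 + (d - 1) * t ≤ n) (i : Fin d → ℕ) (hi : IsTSpread n t i)
    (q : Fin d) (hq : i q + 1 + (d - 1 - (q : ℕ)) * t ≤ n)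
    (hqmax : ∀ r : Fin d, q < r → n < i r + 1 + (d - 1 - (r : ℕ)) * t)
    (w : Fin d → ℕ)
    (hw : w = fun k : Fin d =>
      if (k : ℕ) < (q : ℕ) then i k else i q + 1 + ((k : ℕ) - (q : ℕ)) * t) :
    IsTSpread n t w ∧ SlexGT i w ∧
      ∀ z : Fin d → ℕ, IsTSpread n t z → SlexGT i z → z = w ∨ SlexGT w z := by
  classical
  obtain ⟨hib, his⟩ := hi
  have hwk : ∀ k : Fin d, w k =
      if (k : ℕ) < (q : ℕ) then i k else i q + 1 + ((k : ℕ) - (q : ℕ)) * t := by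
    intro k; rw [hw]
  have hwlt : ∀ k : Fin d, (k : ℕ) < (q : ℕ) → w k = i k := by
    intro k hk; rw [hwk k, if_pos hk]
  have hwge : ∀ k : Fin d, (q : ℕ) ≤ (k : ℕ) →
      w k = i q + 1 + ((k : ℕ) - (q : ℕ)) * t := by
    intro k hk; rw [hwk k, if_neg (by omega)]
  have hiq1 := hib q
  refine ⟨⟨?_, ?_⟩, ?_, ?_⟩
  · -- bounds
    intro k
    by_cases hk : (k : ℕ) < (q : ℕ)
    · rw [hwlt k hk]; exact hib k
    · rw [hwge k (by omega)]
      constructor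
      · omega
      · have h1 : ((k : ℕ) - (q : ℕ)) * t ≤ (d - 1 - (q : ℕ)) * t := by
          apply Nat.mul_le_mul_right
          have := k.isLt; omega
        calc i q + 1 + ((k : ℕ) - (q : ℕ)) * t
            ≤ i q + 1 + (d - 1 - (q : ℕ)) * t := Nat.add_le_add_left h1 _
          _ ≤ n := hq
  · -- spread condition
    intro j hj
    by_cases h1 : j + 1 < (q : ℕ)
    · rw [hwlt ⟨j, Nat.lt_of_succ_lt hj⟩ (by simp only [Fin.val_mk]; omega),
        hwlt ⟨j + 1, hj⟩ (by simpa using h1)]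
      exact his j hj
    · by_cases h2 : j + 1 = (q : ℕ)
      · rw [hwlt ⟨j, Nat.lt_of_succ_lt hj⟩ (by simp only [Fin.val_mk]; omega),
          hwge ⟨j + 1, hj⟩ (by simp only [Fin.val_mk]; omega)]
        have hqe : (⟨j + 1, hj⟩ : Fin d) = q := Fin.ext h2
        have h3 := his j hj
        rw [hqe] at h3
        have h4 : ((⟨j + 1, hj⟩ : Fin d) : ℕ) - (q : ℕ) = 0 := by
          simp only [Fin.val_mk]; omega
        rw [h4]
        simpa using Nat.le_succ_of_le h3
      · have hqj : (q : ℕ) ≤ j := by omega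
        rw [hwge ⟨j, Nat.lt_of_succ_lt hj⟩ (by simpa using hqj),
          hwge ⟨j + 1, hj⟩ (by simp only [Fin.val_mk]; omega)]
        have h5 : ((⟨j + 1, hj⟩ : Fin d) : ℕ) - (q : ℕ) = (j - (q : ℕ)) + 1 := by
          simp only [Fin.val_mk]; omega
        rw [h5, Nat.succ_mul]
        simp only [Fin.val_mk]
        exact le_of_eq (by ring)
  · -- SlexGT i w
    refine ⟨q, ?_, ?_⟩
    · intro r hr
      rw [hwlt r (Fin.lt_def.mp hr)]
    · rw [hwge q le_rfl]
      omega
  · -- maximality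
    rintro z hz ⟨s, hs1, hs2⟩
    have hsq : (s : ℕ) ≤ (q : ℕ) := by
      by_contra h
      push_neg at h
      have hmax := hqmax s (Fin.lt_def.mpr h)
      have hchain := spread_chain hz (d - 1 - (s : ℕ)) s ⟨d - 1, by omega⟩
        (by simp only [Fin.val_mk]; have := s.isLt; omega)
      have hzb := (hz.1 ⟨d - 1, by omega⟩).2
      have hM : ∀ M : ℕ, M = (d - 1 - (s : ℕ)) * t →
          n < i s + 1 + M ∧ z s + M ≤ z ⟨d - 1, by omega⟩ := by
        intro M hMe; rw [hMe]; exact ⟨hmax, hchain⟩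
      obtain ⟨hA, hB⟩ := hM _ rfl
      omega
    rcases lt_or_eq_of_le hsq with hlt | heq
    · -- s < q : SlexGT w z with witness s
      right
      refine ⟨s, ?_, ?_⟩
      · intro r hr
        have hr' : (r : ℕ) < (s : ℕ) := Fin.lt_def.mp hr
        rw [hwlt r (by omega)]
        exact hs1 r hr
      · rw [hwlt s hlt]
        exact hs2
    · -- s = q
      have hse : s = q := Fin.ext heq
      subst hse
      have hzq : i s + 1 ≤ z s := hs2
      have hge : ∀ k : Fin d, w k ≤ z k := by
        intro k
        by_cases hk : (k : ℕ) < (s : ℕ)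
        · rw [hwlt k hk, ← hs1 k (Fin.lt_def.mpr hk)]
        · have hk' : (s : ℕ) ≤ (k : ℕ) := by omega
          rw [hwge k hk']
          have hchain := spread_chain hz ((k : ℕ) - (s : ℕ)) s k (by omega)
          have h6 : i s + 1 + ((k : ℕ) - (s : ℕ)) * t ≤ z s + ((k : ℕ) - (s : ℕ)) * t :=
            Nat.add_le_add_right hzq _
          exact le_trans h6 hchain
      by_cases hzw : z = w
      · exact Or.inl hzw
      · right
        have hex : ∃ m : ℕ, ∃ hm : m < d, z ⟨m, hm⟩ ≠ w ⟨m, hm⟩ := by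
          by_contra hc
          push_neg at hc
          exact hzw (funext fun k => by simpa using hc k k.isLt)
        obtain ⟨hmd, hmne⟩ := Nat.find_spec hex
        refine ⟨⟨Nat.find hex, hmd⟩, ?_, ?_⟩
        · intro r hr
          have hr' : (r : ℕ) < Nat.find hex := Fin.lt_def.mp hr
          by_contra hne'
          refine Nat.find_min hex hr' ⟨r.isLt, ?_⟩
          intro hcc
          rw [show (⟨(r : ℕ), r.isLt⟩ : Fin d) = r from Fin.ext rfl] at hcc
          exact hne' hcc.symm
        · exact lt_of_le_of_ne (hge _) (Ne.symm hmne)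
end

section
/- Let v = x_{j_1}···x_{j_d} and u = x_{i_1}···x_{i_d} be t-spread monomials of degree d in n variables with v ≠ u and v ≥_Borel u (i.e., j_s ≤ i_s for all s). Let q be the maximum index in [d] with j_q + 1 ≤ i_q. Then w = x_{j_1}···x_{j_{q-1}} x_{j_q+1} x_{j_q+1+t} ··· x_{j_q+1+(d-q)t} is a well-defined t-spread monomial of degree d, and w ≥_Borel u. -/
lemma spread_chain_s7 {d t : ℕ} (i : Fin d → ℕ)
    (hsp : ∀ (j : ℕ) (h : j + 1 < d), i ⟨j, Nat.lt_of_succ_lt h⟩ + t ≤ i ⟨j + 1, h⟩) :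
    ∀ b (hb : b < d) a (hab : a ≤ b),
      i ⟨a, lt_of_le_of_lt hab hb⟩ + (b - a) * t ≤ i ⟨b, hb⟩ := by
  intro b
  induction b with
  | zero => intro hb a hab; interval_cases a; simp
  | succ b ih =>
    intro hb a hab
    rcases Nat.lt_or_ge a (b + 1) with h | h
    · have hab' : a ≤ b := Nat.lt_succ_iff.mp h
      have h1 := ih (Nat.lt_of_succ_lt hb) a hab'
      have h2 := hsp b hb
      have h3 : b + 1 - a = (b - a) + 1 := by omega
      rw [h3, Nat.succ_mul]
      linarith
    · have : a = b + 1 := le_antisymm hab h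
      subst this; simp

/-- Let `v = x_{j_1}⋯x_{j_d} ≥_Borel u = x_{i_1}⋯x_{i_d}` with `v ≠ u`, and let
`q` be the maximal index with `j_q + 1 ≤ i_q`.  Then
`w = x_{j_1}⋯x_{j_{q-1}} x_{j_q+1} x_{j_q+1+t} ⋯ x_{j_q+1+(d-q)t}` is a
well-defined `t`-spread monomial of degree `d` and `w ≥_Borel u`. -/
theorem tborel_successor (n d t : ℕ) (ht : 1 ≤ t) (hd : 1 ≤ d)
    (hn : 1 + (d - 1) * t ≤ n)
    (j i : Fin d → ℕ) (hj : IsTSpread n t j) (hi : IsTSpread n t i)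
    (hne : j ≠ i) (hborel : ∀ s : Fin d, j s ≤ i s)
    (q : Fin d) (hq : j q + 1 ≤ i q)
    (hqmax : ∀ r : Fin d, q < r → i r ≤ j r)
    (w : Fin d → ℕ)
    (hw : w = fun k : Fin d =>
      if (k : ℕ) < (q : ℕ) then j k else j q + 1 + ((k : ℕ) - (q : ℕ)) * t) :
    IsTSpread n t w ∧ ∀ s : Fin d, w s ≤ i s := by
  subst hw
  have hle : ∀ s : Fin d, (if (s : ℕ) < (q : ℕ) then j s
      else j q + 1 + ((s : ℕ) - (q : ℕ)) * t) ≤ i s := by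
    intro s
    by_cases hs : (s : ℕ) < (q : ℕ)
    · simpa [hs] using hborel s
    · push_neg at hs
      have hchain := spread_chain_s7 i hi.2 (s : ℕ) s.isLt (q : ℕ) hs
      simp only [Fin.eta] at hchain
      simp only [hs, if_neg (not_lt.mpr hs)]
      linarith
  refine ⟨⟨?_, ?_⟩, hle⟩
  · intro k
    constructor
    · by_cases hk : (k : ℕ) < (q : ℕ)
      · simp only [if_pos hk]; exact (hj.1 k).1
      · simp only [if_neg hk]; omega
    · exact le_trans (hle k) (hi.1 k).2
  · intro a ha
    by_cases h1 : a + 1 ≤ (q : ℕ)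
    · by_cases h2 : a + 1 < (q : ℕ)
      · have ha' : a < (q : ℕ) := Nat.lt_of_succ_lt h2
        simp only [if_pos ha', if_pos h2]
        exact hj.2 a ha
      · have heq : a + 1 = (q : ℕ) := le_antisymm h1 (not_lt.mp h2)
        have ha' : a < (q : ℕ) := by omega
        simp only [if_pos ha', if_neg (by omega : ¬ a + 1 < (q : ℕ))]
        have h3 := hj.2 a ha
        have h4 : (⟨a + 1, ha⟩ : Fin d) = q := by
          apply Fin.ext; simpa using heq
        rw [h4] at h3
        have : a + 1 - (q : ℕ) = 0 := by omega
        rw [this]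
        omega
    · push_neg at h1
      have ha1 : ¬ a < (q : ℕ) := by omega
      have ha2 : ¬ a + 1 < (q : ℕ) := by omega
      simp only [if_neg ha1, if_neg ha2]
      have h5 : a + 1 - (q : ℕ) = (a - (q : ℕ)) + 1 := by omega
      rw [h5, Nat.succ_mul]
      linarith
end

section
/- For a t-spread monomial u = x_{i_1}···x_{i_d} with max(u) = i_d =: n̄, the cardinality of the t-strongly stable set B_t{u} = {w ∈ M_{n̄,d,t} : w ≥_Borel u} equals the nested sum Σ_{s_1=1}^{i_1} Σ_{s_2=1}^{i_2-s_1-t+1} ··· Σ_{s_{d-1}=1}^{i_{d-1}-s_{[d-2]}-(d-2)(t-1)} ( n̄ - (d-1)(t-1) - s_{[d-1]} ), where s_{[k]} = s_1 + s_2 + ··· + s_k. -/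
open Finset

/-- Partial sum of the entries with index `< k` (0-indexed). -/
def cum {e : ℕ} (s : Fin e → ℕ) (k : ℕ) : ℕ :=
  ∑ p ∈ Finset.univ.filter (fun p : Fin e => (p : ℕ) < k), s p

lemma cum_zero {e : ℕ} (s : Fin e → ℕ) : cum s 0 = 0 := by simp [cum]

lemma cum_succ {e : ℕ} (s : Fin e → ℕ) {k : ℕ} (hk : k < e) :
    cum s (k + 1) = cum s k + s ⟨k, hk⟩ := by
  unfold cum
  have h : (Finset.univ.filter (fun p : Fin e => (p : ℕ) < k + 1))
      = insert ⟨k, hk⟩ (Finset.univ.filter (fun p : Fin e => (p : ℕ) < k)) := by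
    ext p
    simp [Fin.ext_iff]
    omega
  rw [h, Finset.sum_insert (by simp)]
  omega

lemma cum_all {e : ℕ} (s : Fin e → ℕ) : cum s e = ∑ p, s p := by
  unfold cum
  rw [Finset.filter_true_of_mem (fun p _ => p.isLt)]

lemma cum_eq_filter_sum {e : ℕ} (s : Fin e → ℕ) (k : Fin e) :
    ∑ p ∈ Finset.univ.filter (fun p : Fin e => p < k), s p = cum s (k : ℕ) := by
  rfl

/-- Successive differences (minus `t - 1`). -/
def phi (t : ℕ) {d : ℕ} (w : Fin d → ℕ) : Fin (d - 1) → ℕ := fun k =>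
  if (k : ℕ) = 0 then w ⟨0, by have := k.isLt; omega⟩
  else w ⟨(k : ℕ), by have := k.isLt; omega⟩ - w ⟨(k : ℕ) - 1, by have := k.isLt; omega⟩ - (t - 1)

lemma phi_spec {d t : ℕ} (ht : 1 ≤ t) (w : Fin d → ℕ)
    (hw : ∀ (j : ℕ) (h : j + 1 < d), w ⟨j, Nat.lt_of_succ_lt h⟩ + t ≤ w ⟨j + 1, h⟩) :
    ∀ k (hk : k < d - 1), w ⟨k, by omega⟩ = cum (phi t w) (k + 1) + k * (t - 1) := by
  intro k
  induction k with
  | zero =>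
    intro hk
    rw [cum_succ _ (by omega), cum_zero]
    simp [phi]
  | succ k ih =>
    intro hk
    have hk' : k < d - 1 := by omega
    have h1 : k + 1 < d := by omega
    have h0 : k < d := by omega
    have hgap : w ⟨k, h0⟩ + t ≤ w ⟨k + 1, h1⟩ := hw k h1
    have ihk : w ⟨k, h0⟩ = cum (phi t w) (k + 1) + k * (t - 1) := ih hk'
    have hphi : phi t w ⟨k + 1, hk⟩ = w ⟨k + 1, h1⟩ - w ⟨k, h0⟩ - (t - 1) := by
      simp [phi]
    have hmul : (k + 1) * (t - 1) = k * (t - 1) + (t - 1) := by ring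
    show w ⟨k + 1, h1⟩ = cum (phi t w) (k + 1 + 1) + (k + 1) * (t - 1)
    rw [cum_succ _ (show k + 1 < d - 1 from hk), hphi, hmul]
    omega

/-- Monotonicity of a `t`-spread sequence. -/
lemma tspread_le {n t d : ℕ} (ht : 1 ≤ t) {i : Fin d → ℕ}
    (hi : (∀ k, 1 ≤ i k ∧ i k ≤ n) ∧
      ∀ (j : ℕ) (h : j + 1 < d), i ⟨j, Nat.lt_of_succ_lt h⟩ + t ≤ i ⟨j + 1, h⟩)
    {j k : ℕ} (hjk : j ≤ k) (hk : k < d) :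
    i ⟨j, by omega⟩ ≤ i ⟨k, hk⟩ := by
  induction k with
  | zero =>
    have : j = 0 := by omega
    subst this; exact le_refl _
  | succ k ih =>
    rcases Nat.eq_or_lt_of_le hjk with h | h
    · subst h; exact le_refl _
    · have hk' : k < d := by omega
      have := ih (by omega) hk'
      have hstep := hi.2 k hk
      omega

/-- Reconstruction of `w` from the difference tuple `s` and the last value `m`. -/
def gfun (t : ℕ) {e : ℕ} (s : Fin (e + 1) → ℕ) (m : ℕ) : Fin (e + 2) → ℕ :=
  fun j => if (j : ℕ) = e + 1 then m else cum s ((j : ℕ) + 1) + (j : ℕ) * (t - 1)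

lemma gfun_last (t : ℕ) {e : ℕ} (s : Fin (e + 1) → ℕ) (m : ℕ) :
    gfun t s m ⟨e + 1, Nat.lt_succ_self _⟩ = m := by simp [gfun]

lemma gfun_val (t : ℕ) {e : ℕ} (s : Fin (e + 1) → ℕ) (m : ℕ) {j : ℕ} (hj : j < e + 1) :
    gfun t s m ⟨j, Nat.lt_succ_of_lt hj⟩ = cum s (j + 1) + j * (t - 1) := by
  simp only [gfun]
  rw [if_neg (by omega)]

lemma phi_gfun (t : ℕ) {e : ℕ} (s : Fin (e + 1) → ℕ) (m : ℕ) :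
    phi t (gfun t s m) = s := by
  funext k
  have hk : (k : ℕ) < e + 1 := k.isLt
  by_cases h0 : (k : ℕ) = 0
  · have h1 : phi t (gfun t s m) k = gfun t s m ⟨0, by omega⟩ := by simp [phi, h0]
    have h2 : gfun t s m ⟨0, by omega⟩ = cum s 1 + 0 * (t - 1) := gfun_val t s m (by omega)
    have h3 : cum s 1 = s ⟨0, by omega⟩ := by
      rw [cum_succ _ (show 0 < e + 1 by omega), cum_zero]
      exact Nat.zero_add _
    rw [h1, h2, h3]
    have hk0 : (⟨0, by omega⟩ : Fin (e + 1)) = k := Fin.ext h0.symm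
    rw [hk0]
    omega
  · have h1 : phi t (gfun t s m) k
        = gfun t s m ⟨(k : ℕ), by omega⟩ - gfun t s m ⟨(k : ℕ) - 1, by omega⟩ - (t - 1) := by
      simp [phi, h0]
    have h2 : gfun t s m ⟨(k : ℕ), by omega⟩ = cum s ((k : ℕ) + 1) + (k : ℕ) * (t - 1) :=
      gfun_val t s m hk
    have h3 : gfun t s m ⟨(k : ℕ) - 1, by omega⟩
        = cum s (((k : ℕ) - 1) + 1) + ((k : ℕ) - 1) * (t - 1) :=
      gfun_val t s m (by omega)
    have h4 : ((k : ℕ) - 1) + 1 = (k : ℕ) := by omega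
    have h5 : cum s ((k : ℕ) + 1) = cum s (k : ℕ) + s k := by
      rw [cum_succ _ hk, Fin.eta]
    have h6 : (k : ℕ) * (t - 1) = ((k : ℕ) - 1) * (t - 1) + (t - 1) := by
      conv_lhs => rw [show (k : ℕ) = ((k : ℕ) - 1) + 1 by omega]
      ring
    rw [h1, h2, h3, h4, h5, h6]
    omega

/-- Counting formula for the `t`-strongly stable set `B_t{u}`:
with `n̄ = max(u) = i_d`,
`|B_t{u}| = Σ_{s_1=1}^{i_1} Σ_{s_2=1}^{i_2-s_1-t+1} ⋯
  Σ_{s_{d-1}=1}^{i_{d-1}-s_{[d-2]}-(d-2)(t-1)} (n̄ - (d-1)(t-1) - s_{[d-1]})`,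
where `s_{[k]} = s_1 + ⋯ + s_k`.  The nested sum is realized as a sum over all
tuples `(s_1,…,s_{d-1})` satisfying the range constraints. -/
theorem card_tstrongly_stable (n d t : ℕ) (ht : 1 ≤ t) (hd : 2 ≤ d)
    (i : Fin d → ℕ) (hi : IsTSpread n t i) :
    Nat.card {w : Fin d → ℕ //
        IsTSpread (i ⟨d - 1, Nat.sub_lt (by omega) Nat.one_pos⟩) t w ∧
        ∀ s : Fin d, w s ≤ i s} =
      ∑ s ∈ (Fintype.piFinset fun _ : Fin (d - 1) =>
            Finset.Icc 1 (i ⟨d - 1, Nat.sub_lt (by omega) Nat.one_pos⟩)).filter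
          (fun s => ∀ k : Fin (d - 1),
            1 ≤ s k ∧
            s k + (∑ p ∈ Finset.univ.filter (fun p : Fin (d - 1) => p < k), s p) +
                (k : ℕ) * (t - 1) ≤
              i ⟨(k : ℕ), Nat.lt_of_lt_of_le k.isLt (Nat.sub_le d 1)⟩),
        (i ⟨d - 1, Nat.sub_lt (by omega) Nat.one_pos⟩ - (d - 1) * (t - 1) -
          ∑ p, s p) := by
  classical
  obtain ⟨e, rfl⟩ : ∃ e, d = e + 2 := ⟨d - 2, by omega⟩
  have hlast : e + 1 < e + 2 := Nat.lt_succ_self _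
  show Nat.card {w : Fin (e + 2) → ℕ //
        IsTSpread (i ⟨e + 1, hlast⟩) t w ∧ ∀ s : Fin (e + 2), w s ≤ i s} =
      ∑ s ∈ (Fintype.piFinset fun _ : Fin (e + 1) =>
            Finset.Icc 1 (i ⟨e + 1, hlast⟩)).filter
          (fun s => ∀ k : Fin (e + 1),
            1 ≤ s k ∧
            s k + (∑ p ∈ Finset.univ.filter (fun p : Fin (e + 1) => p < k), s p) +
                (k : ℕ) * (t - 1) ≤
              i ⟨(k : ℕ), Nat.lt_succ_of_lt k.isLt⟩),
        (i ⟨e + 1, hlast⟩ - (e + 1) * (t - 1) - ∑ p, s p)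
  set nb : ℕ := i ⟨e + 1, hlast⟩ with hnb
  have himono : ∀ (j : ℕ) (hj : j < e + 2), i ⟨j, hj⟩ ≤ nb := by
    intro j hj
    exact tspread_le ht hi (show j ≤ e + 1 by omega) hlast
  set W : Finset (Fin (e + 2) → ℕ) :=
    (Fintype.piFinset fun _ : Fin (e + 2) => Finset.Icc 1 nb).filter
      (fun w => IsTSpread nb t w ∧ ∀ s : Fin (e + 2), w s ≤ i s) with hW
  have memW : ∀ w : Fin (e + 2) → ℕ,
      w ∈ W ↔ (IsTSpread nb t w ∧ ∀ s : Fin (e + 2), w s ≤ i s) := by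
    intro w
    simp only [hW, Finset.mem_filter, Fintype.mem_piFinset, Finset.mem_Icc]
    constructor
    · rintro ⟨-, h⟩; exact h
    · intro h; exact ⟨fun k => h.1.1 k, h⟩
  have hcard : Nat.card {w : Fin (e + 2) → ℕ //
      IsTSpread nb t w ∧ ∀ s : Fin (e + 2), w s ≤ i s} = W.card := by
    rw [Nat.card_congr (Equiv.subtypeEquivRight (fun w => (memW w).symm))]
    rw [Nat.card_eq_fintype_card, Fintype.card_coe]
  rw [hcard]
  clear hcard
  set S : Finset (Fin (e + 1) → ℕ) :=
    (Fintype.piFinset fun _ : Fin (e + 1) => Finset.Icc 1 nb).filter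
      (fun s => ∀ k : Fin (e + 1),
        1 ≤ s k ∧
        s k + (∑ p ∈ Finset.univ.filter (fun p : Fin (e + 1) => p < k), s p) +
            (k : ℕ) * (t - 1) ≤
          i ⟨(k : ℕ), Nat.lt_succ_of_lt k.isLt⟩) with hS
  -- facts about members of W
  have wfacts : ∀ w ∈ W,
      (∀ k : Fin (e + 2), 1 ≤ w k ∧ w k ≤ nb) ∧
      (∀ (j : ℕ) (h : j + 1 < e + 2), w ⟨j, Nat.lt_of_succ_lt h⟩ + t ≤ w ⟨j + 1, h⟩) ∧
      (∀ s : Fin (e + 2), w s ≤ i s) := by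
    intro w hw
    obtain ⟨⟨h1, h2⟩, h3⟩ := (memW w).1 hw
    exact ⟨h1, h2, h3⟩
  -- the representation of members of W through phi
  have wrep : ∀ w ∈ W, ∀ (k : ℕ) (hk : k < e + 1),
      w ⟨k, Nat.lt_succ_of_lt hk⟩ = cum (phi t w) (k + 1) + k * (t - 1) := by
    intro w hw k hk
    exact phi_spec ht w (wfacts w hw).2.1 k hk
  -- phi maps W into S
  have hmaps : ∀ w ∈ W, phi t w ∈ S := by
    intro w hw
    obtain ⟨h1, h2, h3⟩ := wfacts w hw
    have key : ∀ k : Fin (e + 1),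
        1 ≤ phi t w k ∧ phi t w k ≤ nb ∧
        phi t w k + cum (phi t w) (k : ℕ) + (k : ℕ) * (t - 1) ≤
          i ⟨(k : ℕ), Nat.lt_succ_of_lt k.isLt⟩ := by
      intro k
      have hk : (k : ℕ) < e + 1 := k.isLt
      have hcs : cum (phi t w) ((k : ℕ) + 1) = cum (phi t w) (k : ℕ) + phi t w k := by
        rw [cum_succ _ hk, Fin.eta]
      have hrep := wrep w hw (k : ℕ) hk
      have hle : w ⟨(k : ℕ), Nat.lt_succ_of_lt hk⟩ ≤ i ⟨(k : ℕ), Nat.lt_succ_of_lt hk⟩ :=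
        h3 ⟨(k : ℕ), Nat.lt_succ_of_lt hk⟩
      refine ⟨?_, ?_, ?_⟩
      · by_cases h0 : (k : ℕ) = 0
        · have : phi t w k = w ⟨0, by omega⟩ := by simp [phi, h0]
          rw [this]
          exact (h1 ⟨0, by omega⟩).1
        · have hgap : w ⟨(k : ℕ) - 1, by omega⟩ + t ≤ w ⟨(k : ℕ), by omega⟩ := by
            have := h2 ((k : ℕ) - 1) (by omega)
            have heq : ((k : ℕ) - 1) + 1 = (k : ℕ) := by omega
            convert this using 3
            all_goals omega
          have : phi t w k
              = w ⟨(k : ℕ), by omega⟩ - w ⟨(k : ℕ) - 1, by omega⟩ - (t - 1) := by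
            simp [phi, h0]
          rw [this]
          omega
      · by_cases h0 : (k : ℕ) = 0
        · have : phi t w k = w ⟨0, by omega⟩ := by simp [phi, h0]
          rw [this]
          exact (h1 ⟨0, by omega⟩).2
        · have : phi t w k
              = w ⟨(k : ℕ), by omega⟩ - w ⟨(k : ℕ) - 1, by omega⟩ - (t - 1) := by
            simp [phi, h0]
          rw [this]
          have := (h1 ⟨(k : ℕ), by omega⟩).2
          omega
      · omega
    rw [hS, Finset.mem_filter]
    constructor
    · rw [Fintype.mem_piFinset]
      intro k
      rw [Finset.mem_Icc]
      exact ⟨(key k).1, (key k).2.1⟩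
    · intro k
      refine ⟨(key k).1, ?_⟩
      have := (key k).2.2
      have hsum : (∑ p ∈ Finset.univ.filter (fun p : Fin (e + 1) => p < k), phi t w p)
          = cum (phi t w) (k : ℕ) := cum_eq_filter_sum _ k
      rw [hsum]
      omega
  rw [Finset.card_eq_sum_card_fiberwise hmaps]
  refine Finset.sum_congr rfl ?_
  intro s hs
  -- facts about s
  obtain ⟨hs1, hs2⟩ := Finset.mem_filter.1 hs
  have hspos : ∀ k : Fin (e + 1), 1 ≤ s k := fun k => (hs2 k).1
  have hsle : ∀ k : Fin (e + 1),
      cum s ((k : ℕ) + 1) + (k : ℕ) * (t - 1) ≤ i ⟨(k : ℕ), Nat.lt_succ_of_lt k.isLt⟩ := by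
    intro k
    have := (hs2 k).2
    rw [cum_eq_filter_sum _ k] at this
    rw [cum_succ _ k.isLt, Fin.eta]
    omega
  have hcumpos : ∀ k : ℕ, k < e + 1 → 1 ≤ cum s (k + 1) := by
    intro k hk
    rw [cum_succ _ hk]
    have := hspos ⟨k, hk⟩
    omega
  clear hs hs1 hs2
  have hginW : ∀ m, cum s (e + 1) + e * (t - 1) + t ≤ m → m ≤ nb → gfun t s m ∈ W := by
    intro m hm1 hm2
    rw [memW]
    have hval : ∀ k : Fin (e + 2), 1 ≤ gfun t s m k ∧ gfun t s m k ≤ nb := by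
      intro k
      by_cases hk : (k : ℕ) = e + 1
      · have hkk : k = ⟨e + 1, Nat.lt_succ_self _⟩ := Fin.ext hk
        rw [hkk, gfun_last]
        constructor
        · have := hcumpos e (by omega)
          omega
        · exact hm2
      · have hk' : (k : ℕ) < e + 1 := by have := k.isLt; omega
        have hkk : k = ⟨(k : ℕ), Nat.lt_succ_of_lt hk'⟩ := Fin.ext rfl
        rw [hkk, gfun_val t s m hk']
        constructor
        · have := hcumpos (k : ℕ) hk'
          omega
        · calc cum s ((k : ℕ) + 1) + (k : ℕ) * (t - 1)
              ≤ i ⟨(k : ℕ), Nat.lt_succ_of_lt hk'⟩ := hsle ⟨(k : ℕ), hk'⟩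
            _ ≤ nb := himono _ _
    refine ⟨⟨hval, ?_⟩, ?_⟩
    · -- spread condition
      intro j hj
      by_cases hj1 : j + 1 = e + 1
      · have hje : j = e := by omega
        have h1 : gfun t s m ⟨j, Nat.lt_of_succ_lt hj⟩ = cum s (j + 1) + j * (t - 1) :=
          gfun_val t s m (by omega)
        have h2 : gfun t s m ⟨j + 1, hj⟩ = m := by
          have hkk : (⟨j + 1, hj⟩ : Fin (e + 2)) = ⟨e + 1, Nat.lt_succ_self _⟩ :=
            Fin.ext hj1
          rw [hkk, gfun_last]
        have hce : cum s (j + 1) = cum s (e + 1) := by rw [hje]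
        have hme : j * (t - 1) = e * (t - 1) := by rw [hje]
        rw [h1, h2, hce, hme]
        omega
      · have hj' : j + 1 < e + 1 := by omega
        have h1 : gfun t s m ⟨j, Nat.lt_of_succ_lt hj⟩ = cum s (j + 1) + j * (t - 1) :=
          gfun_val t s m (by omega)
        have h2 : gfun t s m ⟨j + 1, hj⟩ = cum s (j + 1 + 1) + (j + 1) * (t - 1) :=
          gfun_val t s m hj'
        rw [h1, h2, cum_succ _ hj']
        have := hspos ⟨j + 1, hj'⟩
        have hmul : (j + 1) * (t - 1) = j * (t - 1) + (t - 1) := by ring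
        rw [hmul]
        omega
    · -- componentwise ≤ i
      intro k
      by_cases hk : (k : ℕ) = e + 1
      · have hkk : k = ⟨e + 1, Nat.lt_succ_self _⟩ := Fin.ext hk
        rw [hkk, gfun_last]
        exact hm2
      · have hk' : (k : ℕ) < e + 1 := by have := k.isLt; omega
        have hkk : k = ⟨(k : ℕ), Nat.lt_succ_of_lt hk'⟩ := Fin.ext rfl
        rw [hkk, gfun_val t s m hk']
        exact hsle ⟨(k : ℕ), hk'⟩
  -- the fiber over s is in bijection with an interval
  have hfib : (W.filter fun w => phi t w = s).card
      = (Finset.Icc (cum s (e + 1) + e * (t - 1) + t) nb).card := by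
    apply Finset.card_bij' (fun w _ => w ⟨e + 1, hlast⟩) (fun m _ => gfun t s m)
    · -- maps into Icc
      intro w hw
      obtain ⟨hwW, hwphi⟩ := Finset.mem_filter.1 hw
      obtain ⟨h1, h2, h3⟩ := wfacts w hwW
      rw [Finset.mem_Icc]
      constructor
      · have hgap : w ⟨e, by omega⟩ + t ≤ w ⟨e + 1, hlast⟩ := h2 e hlast
        have hrep : w ⟨e, by omega⟩ = cum (phi t w) (e + 1) + e * (t - 1) :=
          wrep w hwW e (by omega)
        rw [hwphi] at hrep
        omega
      · exact (h1 ⟨e + 1, hlast⟩).2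
    · -- gfun maps into the fiber
      intro m hm
      rw [Finset.mem_Icc] at hm
      rw [Finset.mem_filter]
      exact ⟨hginW m hm.1 hm.2, phi_gfun t s m⟩
    · -- left inverse
      intro w hw
      obtain ⟨hwW, hwphi⟩ := Finset.mem_filter.1 hw
      funext j
      by_cases hj : (j : ℕ) = e + 1
      · have hjj : j = ⟨e + 1, hlast⟩ := Fin.ext hj
        rw [hjj]
        exact gfun_last t s _
      · have hj' : (j : ℕ) < e + 1 := by have := j.isLt; omega
        have hjj : j = ⟨(j : ℕ), Nat.lt_succ_of_lt hj'⟩ := Fin.ext rfl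
        rw [hjj, gfun_val t s _ hj']
        have := wrep w hwW (j : ℕ) hj'
        rw [hwphi] at this
        exact this.symm
    · -- right inverse
      intro m hm
      exact gfun_last t s m
  rw [hfib, Nat.card_Icc]
  have hcall : cum s (e + 1) = ∑ p : Fin (e + 1), s p := cum_all s
  have hmul : (e + 1) * (t - 1) = e * (t - 1) + (t - 1) := by ring
  rw [hcall, hmul]
  omega
end

section
/- Let N ⊆ M_{n,d,t} be a t-strongly stable set in the sense that it is closed under Borel moves (for u ∈ N, if j ∈ supp(u), i < j, and x_i(u/x_j) is t-spread, then x_i(u/x_j) ∈ N). Then for every u ∈ N and every t-spread monomial v of degree d with v ≥_Borel u (componentwise smaller indices), we have v ∈ N. -/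
lemma spread_gap {n t d : ℕ} {i : Fin d → ℕ} (h : IsTSpread n t i) :
    ∀ a b : Fin d, a < b → i a + t ≤ i b := by
  intro a b hab
  obtain ⟨bv, hb⟩ := b
  induction bv with
  | zero => exact absurd hab (Nat.not_lt_zero a.val).elim
  | succ j IHj =>
    have hgap := h.2 j hb
    rcases Nat.lt_succ_iff_lt_or_eq.mp hab with hlt | heq
    · have := IHj (Nat.lt_of_succ_lt hb) hlt
      omega
    · have : a = ⟨j, Nat.lt_of_succ_lt hb⟩ := Fin.ext heq
      rw [this]; exact hgap

/-- If `N ⊆ M_{n,d,t}` is closed under admissible Borel moves (replacing an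
index `j ∈ supp(u)` by a smaller index `i` whenever the result is `t`-spread),
then `N` contains every `t`-spread monomial `v` with `v ≥_Borel u` (i.e. the
indices of `v` are componentwise `≤` those of `u`) for each `u ∈ N`. -/
theorem tstrongly_stable_char (n d t : ℕ) (ht : 1 ≤ t) (hd : 1 ≤ d)
    (N : Set (Fin d → ℕ)) (hN : ∀ u ∈ N, IsTSpread n t u)
    (hmove : ∀ u ∈ N, ∀ w : Fin d → ℕ, IsTSpread n t w →
      ∀ a b : ℕ, a < b → b ∈ Set.range u → a ∉ Set.range u →
      Set.range w = insert a (Set.range u \ {b}) → w ∈ N) :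
    ∀ u ∈ N, ∀ v : Fin d → ℕ, IsTSpread n t v →
      (∀ s : Fin d, v s ≤ u s) → v ∈ N := by
  classical
  suffices H : ∀ m : ℕ, ∀ u ∈ N, ∀ v : Fin d → ℕ, IsTSpread n t v →
      (∀ s : Fin d, v s ≤ u s) → (∑ s, (u s - v s)) = m → v ∈ N by
    intro u hu v hv hle
    exact H _ u hu v hv hle rfl
  intro m
  induction m using Nat.strong_induction_on with
  | _ m IH =>
  intro u hu v hv hle hsum
  by_cases hvu : v = u
  · rwa [hvu]
  have hu' := hN u hu
  have hex : ∃ j : ℕ, ∃ h : j < d, v ⟨j, h⟩ < u ⟨j, h⟩ := by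
    by_contra h
    push_neg at h
    exact hvu (funext fun s => le_antisymm (hle s)
      (by simpa using h s.val s.isLt))
  set j0 := Nat.find hex with hj0
  obtain ⟨hj0d, hklt⟩ := Nat.find_spec hex
  set k : Fin d := ⟨j0, hj0d⟩ with hk
  have hkmin : ∀ s : Fin d, s < k → u s = v s := by
    intro s hs
    have := Nat.find_min hex (m := s.val) hs
    push_neg at this
    exact le_antisymm (this s.isLt) (hle s)
  have hvk1 : 1 ≤ v k := (hv.1 k).1
  have huk2 : 2 ≤ u k := by omega
  set w : Fin d → ℕ := fun s => if s = k then u k - 1 else u s with hw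
  have hwk : w k = u k - 1 := by simp [hw]
  have hwne : ∀ s, s ≠ k → w s = u s := by intro s hs; simp [hw, hs]
  have hwspread : IsTSpread n t w := by
    constructor
    · intro s
      by_cases hs : s = k
      · rw [hs, hwk]
        have := (hu'.1 k).2
        omega
      · rw [hwne s hs]; exact hu'.1 s
    · intro j h
      have hgap := hu'.2 j h
      by_cases h1 : (⟨j, Nat.lt_of_succ_lt h⟩ : Fin d) = k
      · have h2 : (⟨j + 1, h⟩ : Fin d) ≠ k := by
          intro hc; rw [← h1] at hc; exact absurd (Fin.val_eq_val _ _ |>.mpr hc) (by simp)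
        rw [h1, hwk, hwne _ h2]
        rw [h1] at hgap
        omega
      · rw [hwne _ h1]
        by_cases h2 : (⟨j + 1, h⟩ : Fin d) = k
        · rw [h2, hwk]
          have hjk : (⟨j, Nat.lt_of_succ_lt h⟩ : Fin d) < k := by
            rw [← h2]; exact Nat.lt_succ_self j
          have hvgap := hv.2 j h
          rw [h2] at hvgap
          have := hkmin _ hjk
          rw [this]
          omega
        · rw [hwne _ h2]; exact hgap
  have hanotin : (u k - 1) ∉ Set.range u := by
    rintro ⟨s, hs⟩
    rcases lt_trichotomy s k with h1 | h1 | h1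
    · have hg := spread_gap hv s k h1
      have := hkmin s h1
      omega
    · rw [h1] at hs; omega
    · have hg := spread_gap hu' k s h1
      omega
  have huinj : Function.Injective u := by
    intro a b hab
    rcases lt_trichotomy a b with h1 | h1 | h1
    · have := spread_gap hu' a b h1; omega
    · exact h1
    · have := spread_gap hu' b a h1; omega
  have hrange : Set.range w = insert (u k - 1) (Set.range u \ {u k}) := by
    ext x
    constructor
    · rintro ⟨s, rfl⟩
      by_cases hs : s = k
      · rw [hs, hwk]; exact Set.mem_insert _ _
      · rw [hwne s hs]
        refine Set.mem_insert_of_mem _ ⟨⟨s, rfl⟩, ?_⟩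
        simp only [Set.mem_singleton_iff]
        intro hc
        exact hs (huinj hc)
    · rintro (rfl | ⟨⟨s, rfl⟩, hx⟩)
      · exact ⟨k, hwk⟩
      · simp only [Set.mem_singleton_iff] at hx
        have hs : s ≠ k := fun hc => hx (by rw [hc])
        exact ⟨s, hwne s hs⟩
  have hwN : w ∈ N :=
    hmove u hu w hwspread (u k - 1) (u k) (by omega) ⟨k, rfl⟩ hanotin hrange
  have hle' : ∀ s, v s ≤ w s := by
    intro s
    by_cases hs : s = k
    · rw [hs, hwk]; omega
    · rw [hwne s hs]; exact hle s
  have hlt : (∑ s, (w s - v s)) < m := by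
    rw [← hsum]
    refine Finset.sum_lt_sum ?_ ⟨k, Finset.mem_univ k, ?_⟩
    · intro s _
      by_cases hs : s = k
      · rw [hs, hwk]; omega
      · rw [hwne s hs]
    · rw [hwk]; omega
  exact IH _ hlt w hwN v hv hle' rfl
end
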